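/- On the five-point poset P₁ (diamond with a bottom element w), the monotone generator L₁ with L_{a,w} = L_{b,w} = L_{c,w} = L_{d,b} = L_{d,c} = 1 and all other off-diagonal entries 0 is not completely monotone: L₁ cannot be written as a nonnegative linear combination Σ_{f ∈ M} Λ_f I_f over increasing functions f : P₁ → P₁. -/

import Mathlib

open Finset
open scoped Classical

/-- The vector `W^{Γ,x,y}` from the paper, as a function of coordinates `(v,z)`. -/
noncomputable def Wvec {S : Type*} [PartialOrder S] (Γ : Finset S) (x y v z : S) : ℝ :=
  if (x ≤ y ∧ y ∉ Γ ∧ v = y ∧ z ∈ Γ) ∨ (y ≤ x ∧ y ∈ Γ ∧ v = y ∧ z ∉ Γ) then 1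
  else if (x ≤ y ∧ y ∉ Γ ∧ v = x ∧ z ∈ Γ) ∨ (y ≤ x ∧ y ∈ Γ ∧ v = x ∧ z ∉ Γ) then -1
  else 0

/-- The vector `I_f` from the paper: `(I_f)_{x,y} = 1` iff `f x = y`. -/
noncomputable def Ivec {S : Type*} (f : S → S) (x y : S) : ℝ := if f x = y then 1 else 0

/-- `Γ` is an up-set: upward closed. -/
def IsUpSet {S : Type*} [Preorder S] (Γ : Finset S) : Prop :=
  ∀ a b : S, a ∈ Γ → a ≤ b → b ∈ Γ

/-- Euclidean inner product `⟨L, W^{Γ,x,y}⟩` over the off-diagonal coordinates `S₂`. -/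
noncomputable def dotW {S : Type*} [Fintype S] [PartialOrder S]
    (L : S → S → ℝ) (Γ : Finset S) (x y : S) : ℝ :=
  ∑ p ∈ Finset.univ.filter (fun p : S × S => p.1 ≠ p.2), L p.1 p.2 * Wvec Γ x y p.1 p.2

/-- `L` is (the off-diagonal part of) a monotone generator. -/
def IsMonGen {S : Type*} [Fintype S] [PartialOrder S] (L : S → S → ℝ) : Prop :=
  (∀ x y : S, x ≠ y → 0 ≤ L x y) ∧
    ∀ Γ : Finset S, IsUpSet Γ → ∀ x y : S, 0 ≤ dotW L Γ x y

/-- `L` is a completely monotone generator: a nonnegative combination of the `I_f`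
over increasing maps `f`. -/
def IsCMonGen {S : Type*} [Fintype S] [PartialOrder S] (L : S → S → ℝ) : Prop :=
  ∃ Λ : (S → S) → ℝ, (∀ f, 0 ≤ Λ f) ∧ (∀ f, ¬ Monotone f → Λ f = 0) ∧
    ∀ x y : S, x ≠ y → L x y = ∑ f : S → S, Λ f * Ivec f x y

/-- The five-point poset `P₁`: diamond `a < b,c < d` with bottom element `w < a`. -/
inductive P1 | w | a | b | c | d
  deriving DecidableEq

instance instFintypeP1 : Fintype P1 :=
  ⟨⟨(([P1.w, P1.a, P1.b, P1.c, P1.d] : List P1) : Multiset P1), by decide⟩, fun x => by cases x <;> decide⟩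

/-- Order on `P₁`, generated by the covering relations `w<a, a<b, a<c, b<d, c<d`. -/
def P1.ble : P1 → P1 → Bool
  | .w, _ => true
  | .a, .a | .a, .b | .a, .c | .a, .d => true
  | .b, .b | .b, .d => true
  | .c, .c | .c, .d => true
  | .d, .d => true
  | _, _ => false

instance : LE P1 := ⟨fun x y => P1.ble x y⟩
instance : DecidableRel (α := P1) (· ≤ ·) :=
  fun x y => inferInstanceAs (Decidable (P1.ble x y = true))

instance : PartialOrder P1 where
  le_refl := by decide
  le_trans := by decide
  le_antisymm := by decide

/-- The generator `L₁` on `P₁`: rates `L_{a,w}=L_{b,w}=L_{c,w}=L_{d,b}=L_{d,c}=1`. -/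
noncomputable def L1 : P1 → P1 → ℝ := fun x y =>
  if (x = .a ∧ y = .w) ∨ (x = .b ∧ y = .w) ∨ (x = .c ∧ y = .w) ∨
     (x = .d ∧ y = .b) ∨ (x = .d ∧ y = .c) then 1 else 0



/-- Certificate functional: nonnegative on `I_f` for every monotone `f`,
but negative on `L₁`. -/
noncomputable def psiCert (f : P1 → P1) : ℝ :=
  Ivec f .a .w + Ivec f .b .a + Ivec f .b .c + Ivec f .c .a + Ivec f .c .b
    - Ivec f .d .b - Ivec f .d .c

lemma psiCert_nonneg (f : P1 → P1) (hf : Monotone f) : 0 ≤ psiCert f := by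
  unfold psiCert Ivec
  by_cases hdb : f .d = .b
  · have hc : f .c ≤ .b := hdb ▸ hf (show (P1.c : P1) ≤ .d by decide)
    have hdc : ¬ f .d = .c := by rw [hdb]; decide
    cases hfc : f P1.c with
    | w =>
      have ha : f .a ≤ P1.w := hfc ▸ hf (show (P1.a : P1) ≤ .c by decide)
      have hfa : f .a = P1.w := by
        cases hx : f P1.a <;> rw [hx] at ha <;> first | rfl | exact absurd ha (by decide)
      simp only [hdb, hdc, hfa, hfc]
      norm_num
      split_ifs <;> norm_num
    | a => simp only [hdb, hdc, hfc]; norm_num; split_ifs <;> norm_num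
    | b => simp only [hdb, hdc, hfc]; norm_num; split_ifs <;> norm_num
    | c => rw [hfc] at hc; exact absurd hc (by decide)
    | d => rw [hfc] at hc; exact absurd hc (by decide)
  · by_cases hdc : f .d = .c
    · have hb : f .b ≤ .c := hdc ▸ hf (show (P1.b : P1) ≤ .d by decide)
      cases hfb : f P1.b with
      | w =>
        have ha : f .a ≤ P1.w := hfb ▸ hf (show (P1.a : P1) ≤ .b by decide)
        have hfa : f .a = P1.w := by
          cases hx : f P1.a <;> rw [hx] at ha <;> first | rfl | exact absurd ha (by decide)
        simp only [hdb, hdc, hfa, hfb]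
        norm_num
        split_ifs <;> norm_num
      | a => simp only [hdb, hdc, hfb]; norm_num; split_ifs <;> norm_num
      | b => rw [hfb] at hb; exact absurd hb (by decide)
      | c => simp only [hdb, hdc, hfb]; norm_num; split_ifs <;> norm_num
      | d => rw [hfb] at hb; exact absurd hb (by decide)
    · simp only [hdb, hdc]
      norm_num
      split_ifs <;> norm_num

/-- the monotone generator `L₁` on `P₁` is not completely monotone. -/
theorem L1_not_cmon : ¬ IsCMonGen L1 := by
  rintro ⟨Λ, hpos, hmono, heq⟩
  have inst_eq : (fun (a b : P1) => Classical.propDecidable (a = b)) =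
      (instDecidableEqP1 : DecidableEq P1) := Subsingleton.elim _ _
  have h1 := heq .a .w (by decide); rw [inst_eq] at h1
  have h2 := heq .b .a (by decide); rw [inst_eq] at h2
  have h3 := heq .b .c (by decide); rw [inst_eq] at h3
  have h4 := heq .c .a (by decide); rw [inst_eq] at h4
  have h5 := heq .c .b (by decide); rw [inst_eq] at h5
  have h6 := heq .d .b (by decide); rw [inst_eq] at h6
  have h7 := heq .d .c (by decide); rw [inst_eq] at h7
  have hsum : ∑ f : P1 → P1, Λ f * psiCert f = -1 := by
    unfold psiCert
    simp only [mul_add, mul_sub]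
    rw [Finset.sum_sub_distrib, Finset.sum_sub_distrib, Finset.sum_add_distrib,
      Finset.sum_add_distrib, Finset.sum_add_distrib, Finset.sum_add_distrib,
      ← h1, ← h2, ← h3, ← h4, ← h5, ← h6, ← h7]
    simp [L1]
  have hge : 0 ≤ ∑ f : P1 → P1, Λ f * psiCert f := by
    apply Finset.sum_nonneg
    intro f _
    rcases eq_or_ne (Λ f) 0 with h | h
    · simp [h]
    · refine mul_nonneg (hpos f) (psiCert_nonneg f ?_)
      by_contra hm
      exact h (hmono f hm)
  linarith
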